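/- arXiv:math/0611296 — 2 statements merged into one kernel-verified Lean document; each statement's English description precedes it below -/
import Mathlib

section
/- Let K be a field of characteristic 0 and let K̂Y be the space of arbitrary (possibly infinite) K-linear combinations of partitions. Define linear operators U and D on K̂Y coefficientwise by U λ = ∑_{ν ⋗ λ} s_β(λ ⋖ ν)·ν and D λ = ∑_{μ ⋖ λ} s_β(μ ⋖ λ)·a'(λ)·a'(μ)·μ. Then UD + DU = I on K̂Y, and (D − U)𝐘 = 𝐘 where 𝐘 = ∑_{λ ∈ Y} λ ∈ K̂Y. That is, Y_β = (Y, s_β, a') is a β-signed differential poset. -/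
open scoped Classical

/-- An integer partition: a weakly decreasing sequence of naturals (rows indexed
from `0`) which is eventually zero. -/
structure YPart where
  part : ℕ → ℕ
  antitone' : Antitone part
  finite' : ∃ N : ℕ, ∀ n : ℕ, N ≤ n → part n = 0

namespace YPart

/-- Containment of Young diagrams. -/
instance : PartialOrder YPart where
  le p q := ∀ i, p.part i ≤ q.part i
  le_refl p i := le_refl _
  le_trans p q r h h' i := (h i).trans (h' i)
  le_antisymm p q h h' := by
    cases p; cases q
    simp only [mk.injEq]
    funext i
    exact le_antisymm (h i) (h' i)

/-- The empty partition is the minimum of Young's lattice. -/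
instance : OrderBot YPart where
  bot := ⟨fun _ => 0, fun _ _ _ => le_refl 0, ⟨0, fun _ _ => rfl⟩⟩
  bot_le p i := Nat.zero_le _

/-- The number of boxes `|λ|`. -/
noncomputable def weight (p : YPart) : ℕ := ∑ᶠ i, p.part i

/-- `a(λ) = (−1)^{λ₂ + λ₄ + λ₆ + ⋯}` (even-numbered rows in 1-based indexing). -/
noncomputable def aSign (p : YPart) : ℤ := (-1) ^ (∑ᶠ i : ℕ, p.part (2 * i + 1))

lemma conjSet_finite (p : YPart) (j : ℕ) : {i : ℕ | j + 1 ≤ p.part i}.Finite := by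
  obtain ⟨N, hN⟩ := p.finite'
  apply Set.Finite.subset (Set.finite_Iio N)
  intro i hi
  simp only [Set.mem_setOf_eq] at hi
  simp only [Set.mem_Iio]
  by_contra h
  push_neg at h
  have := hN i h
  omega

/-- The conjugate partition `λ'`: `λ'_j = #{i : λ_i ≥ j}` (rows indexed from 0). -/
noncomputable def conj (p : YPart) : YPart where
  part j := {i : ℕ | j + 1 ≤ p.part i}.ncard
  antitone' := by
    intro a b hab
    refine Set.ncard_le_ncard ?_ (conjSet_finite p a)
    intro i hi
    simp only [Set.mem_setOf_eq] at hi ⊢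
    omega
  finite' := by
    refine ⟨p.part 0, fun j hj => ?_⟩
    show ({i : ℕ | j + 1 ≤ p.part i}).ncard = 0
    have h : {i : ℕ | j + 1 ≤ p.part i} = ∅ := by
      ext i
      simp only [Set.mem_setOf_eq, Set.mem_empty_iff_false, iff_false, not_le]
      have := p.antitone' (Nat.zero_le i)
      omega
    rw [h]
    simp

/-- `a'(λ) = a(λ')`. -/
noncomputable def aconj (p : YPart) : ℤ := aSign (conj p)

/-- The (0-based) row index of the box added in a cover `p ⋖ q`: the first
index where the two partitions differ. -/
noncomputable def boxRow (p q : YPart) : ℕ := sInf {i : ℕ | p.part i ≠ q.part i}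

/-- `s_α(μ ⋖ λ) = (−1)^{μ₁ + ⋯ + μ_i}` where the added box lies in (1-based) row `i`. -/
noncomputable def salpha (p q : YPart) : ℤ :=
  (-1) ^ (∑ j ∈ Finset.range (boxRow p q + 1), p.part j)

/-- `s_β(μ ⋖ λ) = a(λ) a(μ) s_α(μ ⋖ λ)`. -/
noncomputable def sbeta (p q : YPart) : ℤ := aSign q * aSign p * salpha p q

end YPart

namespace SDP

variable {P : Type*} [PartialOrder P] [OrderBot P]

/-- The sign of a saturated chain, recorded as a list: the product of the
edge signs `s` over consecutive pairs. -/
def chainSign {α : Type*} (s : α → α → ℤ) : List α → ℤ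
  | [] => 1
  | [_] => 1
  | x :: y :: rest => s x y * chainSign s (y :: rest)

/-- Maximal chains from `⊥` to `x`: lists whose consecutive entries are covers,
starting at `⊥` and ending at `x`. -/
def chainsTo (x : P) : Set (List P) :=
  {l : List P | l.Chain' (· ⋖ ·) ∧ l.head? = some (⊥ : P) ∧ l.getLast? = some x}

/-- `e(x)`: the signed sum of maximal chains from `⊥` to `x`. -/
noncomputable def e (s : P → P → ℤ) (x : P) : ℤ :=
  ∑ᶠ l ∈ chainsTo x, chainSign s l

variable (K : Type*) [Field K]

/-- The up operator on `K̂P`, written coefficientwise: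
`(U f)(y) = ∑_{x ⋖ y} s(x ⋖ y) f(x)`. -/
noncomputable def Uop (s : P → P → ℤ) (f : P → K) : P → K :=
  fun y => ∑ᶠ x ∈ {x : P | x ⋖ y}, (s x y : K) * f x

/-- The down operator on `K̂P`, written coefficientwise:
`(D f)(x) = ∑_{y ⋗ x} s(x ⋖ y) v(y) v(x) f(y)`. -/
noncomputable def Dop (s : P → P → ℤ) (v : P → ℤ) (f : P → K) : P → K :=
  fun x => ∑ᶠ y ∈ {y : P | x ⋖ y}, (s x y : K) * (v y : K) * (v x : K) * f y

end SDP

namespace YPart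

lemma ypext {p q : YPart} (h : ∀ i, p.part i = q.part i) : p = q := by
  cases p; cases q
  simp only [mk.injEq]
  funext i
  exact h i

lemma le_def' {p q : YPart} : p ≤ q ↔ ∀ i, p.part i ≤ q.part i := Iff.rfl

/-- Row `r` is an addable corner of `p`. -/
def Addable (p : YPart) (r : ℕ) : Prop := r = 0 ∨ p.part r < p.part (r - 1)

/-- Row `r` is a removable corner of `p`. -/
def Removable (p : YPart) (r : ℕ) : Prop := p.part (r + 1) < p.part r

lemma addable_zero (p : YPart) : Addable p 0 := Or.inl rfl

/-- Add a box in row `r` (if possible). -/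
noncomputable def add (p : YPart) (r : ℕ) : YPart :=
  if h : Addable p r then
    { part := fun i => if i = r then p.part i + 1 else p.part i
      antitone' := by
        intro i j hij
        dsimp only
        rcases eq_or_ne j r with hj | hj
        · subst hj
          rw [if_pos rfl]
          rcases eq_or_ne i j with hi | hi
          · subst hi; rw [if_pos rfl]
          · rw [if_neg hi]
            have hir : i < j := lt_of_le_of_ne hij hi
            rcases h with h0 | hlt
            · omega
            · have h1 : p.part (j - 1) ≤ p.part i := p.antitone' (by omega)
              omega
        · rw [if_neg hj]
          rcases eq_or_ne i r with hi | hi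
          · subst hi
            rw [if_pos rfl]
            have := p.antitone' hij
            omega
          · rw [if_neg hi]
            exact p.antitone' hij
      finite' := by
        obtain ⟨N, hN⟩ := p.finite'
        refine ⟨N + r + 1, fun n hn => ?_⟩
        rw [if_neg (by omega)]
        exact hN n (by omega) }
  else p

/-- Remove a box in row `r` (if possible). -/
noncomputable def sub (p : YPart) (r : ℕ) : YPart :=
  if h : Removable p r then
    { part := fun i => if i = r then p.part i - 1 else p.part i
      antitone' := by
        intro i j hij
        dsimp only
        rcases eq_or_ne j r with hj | hj
        · subst hj
          rw [if_pos rfl]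
          rcases eq_or_ne i j with hi | hi
          · subst hi; rw [if_pos rfl]
          · rw [if_neg hi]
            have h1 : p.part j ≤ p.part i := p.antitone' hij
            omega
        · rw [if_neg hj]
          rcases eq_or_ne i r with hi | hi
          · rw [if_pos hi, hi]
            have hir : r < j := by omega
            have h1 : p.part j ≤ p.part (r + 1) := p.antitone' (by omega)
            have h2 := h
            unfold Removable at h2
            omega
          · rw [if_neg hi]
            exact p.antitone' hij
      finite' := by
        obtain ⟨N, hN⟩ := p.finite'
        refine ⟨N, fun n hn => ?_⟩
        have := hN n hn
        split_ifs <;> omega }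
  else p

lemma add_part {p : YPart} {r : ℕ} (h : Addable p r) (i : ℕ) :
    (add p r).part i = p.part i + if i = r then 1 else 0 := by
  rw [add, dif_pos h]
  dsimp only
  split_ifs <;> omega

lemma sub_part {p : YPart} {r : ℕ} (h : Removable p r) (i : ℕ) :
    (sub p r).part i = p.part i - if i = r then 1 else 0 := by
  rw [sub, dif_pos h]
  dsimp only
  split_ifs <;> omega

lemma removable_pos {p : YPart} {r : ℕ} (h : Removable p r) : 0 < p.part r := by
  unfold Removable at h; omega

lemma removable_add {p : YPart} {r : ℕ} (h : Addable p r) : Removable (add p r) r := by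
  unfold Removable
  simp only [add_part h]
  have : p.part (r + 1) ≤ p.part r := p.antitone' (by omega)
  split_ifs <;> omega

lemma sub_add {p : YPart} {r : ℕ} (h : Addable p r) : sub (add p r) r = p := by
  apply ypext
  intro i
  rw [sub_part (removable_add h), add_part h]
  split_ifs <;> omega

lemma addable_sub {p : YPart} {r : ℕ} (h : Removable p r) : Addable (sub p r) r := by
  unfold Removable at h
  rcases Nat.eq_zero_or_pos r with h0 | h0
  · exact Or.inl h0
  · refine Or.inr ?_
    simp only [sub_part h]
    have : p.part r ≤ p.part (r - 1) := p.antitone' (Nat.sub_le r 1)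
    split_ifs <;> omega

lemma add_sub {p : YPart} {r : ℕ} (h : Removable p r) : add (sub p r) r = p := by
  have h' : 0 < p.part r := removable_pos h
  apply ypext
  intro i
  rw [add_part (addable_sub h), sub_part h]
  rcases eq_or_ne i r with hi | hi <;> simp [hi] <;> omega

lemma lt_add {p : YPart} {r : ℕ} (h : Addable p r) : p < add p r := by
  rw [lt_iff_le_and_ne]
  constructor
  · intro i
    rw [add_part h]
    omega
  · intro he
    have h2 : p.part r = (add p r).part r := by rw [← he]
    rw [add_part h, if_pos rfl] at h2
    omega

/-- Covers in Young's lattice are exactly single-box additions. -/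
lemma covBy_iff {p q : YPart} : p ⋖ q ↔ ∃ r, Addable p r ∧ q = add p r := by
  constructor
  · intro h
    have hle : p ≤ q := h.1.le
    have hne : p ≠ q := h.1.ne
    have hex : ∃ i, p.part i ≠ q.part i := by
      by_contra hc
      push_neg at hc
      exact hne (ypext hc)
    let r := Nat.find hex
    have hr : p.part r ≠ q.part r := Nat.find_spec hex
    have hrmin : ∀ i, i < r → p.part i = q.part i := fun i hi => by
      by_contra hc
      exact Nat.find_min hex hi hc
    have hA : Addable p r := by
      rcases Nat.eq_zero_or_pos r with h0 | h0
      · exact Or.inl h0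
      · refine Or.inr ?_
        have h1 : p.part (r - 1) = q.part (r - 1) := hrmin _ (by omega)
        have h2 : q.part r ≤ q.part (r - 1) := q.antitone' (Nat.sub_le r 1)
        have h3 : p.part r ≤ q.part r := hle r
        omega
    refine ⟨r, hA, ?_⟩
    have hle2 : add p r ≤ q := by
      intro i
      rw [add_part hA]
      rcases eq_or_ne i r with hi | hi
      · rw [if_pos hi, hi]
        have h4 := hle r
        omega
      · rw [if_neg hi]
        have := hle i
        omega
    rcases eq_or_ne (add p r) q with he | hne2
    · exact he.symm
    · exact absurd (lt_of_le_of_ne hle2 hne2) (h.2 (lt_add hA))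
  · rintro ⟨r, hA, rfl⟩
    refine ⟨lt_add hA, ?_⟩
    intro m hm1 hm2
    have h1 : ∀ i, p.part i ≤ m.part i := hm1.le
    have h2 : ∀ i, m.part i ≤ (add p r).part i := hm2.le
    have hne1 : p ≠ m := hm1.ne
    have hne2 : m ≠ add p r := hm2.ne
    have : m = p ∨ m = add p r := by
      by_cases hc : m.part r = p.part r
      · left
        apply ypext
        intro i
        have hx := h1 i
        have hy := h2 i
        rw [add_part hA] at hy
        rcases eq_or_ne i r with hi | hi
        · rw [hi] at hx hy ⊢
          rw [if_pos rfl] at hy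
          omega
        · rw [if_neg hi] at hy; omega
      · right
        apply ypext
        intro i
        have hx := h1 i
        have hy := h2 i
        rw [add_part hA] at hy
        rw [add_part hA]
        rcases eq_or_ne i r with hi | hi
        · rw [hi] at hx hy ⊢
          rw [if_pos rfl] at hy ⊢
          omega
        · rw [if_neg hi] at hy ⊢; omega
    rcases this with h | h
    · exact hne1 h.symm
    · exact hne2 h

lemma covBy_iff' {p q : YPart} : q ⋖ p ↔ ∃ r, Removable p r ∧ q = sub p r := by
  rw [covBy_iff]
  constructor
  · rintro ⟨r, hA, rfl⟩
    exact ⟨r, removable_add hA, (sub_add hA).symm⟩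
  · rintro ⟨r, hR, rfl⟩
    exact ⟨r, addable_sub hR, (add_sub hR).symm⟩

end YPart
namespace YPart

lemma neg_one_pow_congr {R : Type*} [Monoid R] [HasDistribNeg R] {a b : ℕ}
    (h : a % 2 = b % 2) : ((-1 : R)) ^ a = (-1) ^ b := by
  rcases Nat.even_or_odd a with he | ho
  · have hb : Even b := by rw [Nat.even_iff] at he ⊢; omega
    rw [he.neg_one_pow, hb.neg_one_pow]
  · have hb : Odd b := by rw [Nat.odd_iff] at ho ⊢; omega
    rw [ho.neg_one_pow, hb.neg_one_pow]

lemma neg_one_pow_mul_self {R : Type*} [Monoid R] [HasDistribNeg R] (n : ℕ) :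
    ((-1 : R)) ^ n * (-1) ^ n = 1 := by
  rw [← pow_add]
  exact Even.neg_one_pow ⟨n, rfl⟩

lemma conj_part (p : YPart) (j : ℕ) :
    (conj p).part j = {i : ℕ | j + 1 ≤ p.part i}.ncard := rfl

lemma odd_support_finite (p : YPart) :
    (Function.support fun i => p.part (2 * i + 1)).Finite := by
  obtain ⟨N, hN⟩ := p.finite'
  apply Set.Finite.subset (Set.finite_Iio N)
  intro i hi
  simp only [Function.mem_support] at hi
  simp only [Set.mem_Iio]
  by_contra hc
  exact hi (hN _ (by omega))

lemma aSign_step {p q : YPart} {c : ℕ}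
    (h : ∀ j, q.part j = p.part j + if j = c then 1 else 0) :
    aSign q * aSign p = (-1) ^ c := by
  unfold aSign
  have hsup2 : (Function.support fun i : ℕ => if 2 * i + 1 = c then 1 else 0).Finite := by
    apply Set.Finite.subset (Set.finite_Iio c)
    intro i hi
    simp only [Function.mem_support] at hi
    have heq : 2 * i + 1 = c := by
      by_contra hne
      exact hi (if_neg hne)
    simp only [Set.mem_Iio]
    omega
  have h1 : ∑ᶠ i, q.part (2 * i + 1)
      = (∑ᶠ i, p.part (2 * i + 1)) + ∑ᶠ i : ℕ, (if 2 * i + 1 = c then 1 else 0) := by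
    rw [← finsum_add_distrib (odd_support_finite p) hsup2]
    exact finsum_congr fun i => h (2 * i + 1)
  have h2 : (∑ᶠ i : ℕ, (if 2 * i + 1 = c then 1 else 0)) = if Odd c then 1 else 0 := by
    rcases Nat.even_or_odd c with he | ho
    · rw [if_neg (Nat.not_odd_iff_even.mpr he)]
      have : ∀ i : ℕ, (if 2 * i + 1 = c then 1 else 0) = 0 := by
        intro i
        rw [if_neg]
        rw [Nat.even_iff] at he
        omega
      rw [finsum_congr this, finsum_zero]
    · obtain ⟨k, hk⟩ := ho
      rw [if_pos ⟨k, hk⟩]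
      rw [finsum_eq_single _ k (fun x hx => by rw [if_neg (by omega)])]
      rw [if_pos (by omega)]
  rw [h1, h2, ← pow_add]
  apply neg_one_pow_congr
  rcases Nat.even_or_odd c with he | ho
  · rw [if_neg (Nat.not_odd_iff_even.mpr he)]
    rw [Nat.even_iff] at he
    omega
  · rw [if_pos ho]
    rw [Nat.odd_iff] at ho
    omega

lemma aSign_add {p : YPart} {r : ℕ} (h : Addable p r) :
    aSign (add p r) * aSign p = (-1) ^ r := aSign_step (add_part h)

lemma conj_part_add {p : YPart} {r : ℕ} (h : Addable p r) (j : ℕ) :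
    (conj (add p r)).part j = (conj p).part j + if j = p.part r then 1 else 0 := by
  rw [conj_part, conj_part]
  rcases eq_or_ne j (p.part r) with hj | hj
  · rw [if_pos hj, hj]
    have hset : {i : ℕ | p.part r + 1 ≤ (add p r).part i}
        = insert r {i : ℕ | p.part r + 1 ≤ p.part i} := by
      ext i
      simp only [Set.mem_setOf_eq, Set.mem_insert_iff, add_part h]
      rcases eq_or_ne i r with hi | hi
      · simp [hi]
      · simp [hi]
    rw [hset, Set.ncard_insert_of_notMem (by simp) (conjSet_finite p (p.part r))]
  · rw [if_neg hj]
    congr 1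
    ext i
    simp only [Set.mem_setOf_eq, add_part h]
    rcases eq_or_ne i r with hi | hi
    · rw [hi, if_pos rfl]
      omega
    · rw [if_neg hi]
      omega

lemma aconj_add {p : YPart} {r : ℕ} (h : Addable p r) :
    aconj (add p r) * aconj p = (-1) ^ (p.part r) :=
  aSign_step (conj_part_add h)

lemma boxRow_add {p : YPart} {r : ℕ} (h : Addable p r) : boxRow p (add p r) = r := by
  have hset : {i : ℕ | p.part i ≠ (add p r).part i} = {r} := by
    ext i
    simp only [Set.mem_setOf_eq, Set.mem_singleton_iff, add_part h]
    rcases eq_or_ne i r with hi | hi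
    · simp [hi]
    · simp [hi]
  unfold boxRow
  rw [hset]
  have hmem : sInf ({r} : Set ℕ) ∈ ({r} : Set ℕ) := Nat.sInf_mem ⟨r, rfl⟩
  exact hmem

lemma sbeta_add {p : YPart} {r : ℕ} (h : Addable p r) :
    sbeta p (add p r) = (-1) ^ (r + ∑ j ∈ Finset.range (r + 1), p.part j) := by
  unfold sbeta salpha
  rw [boxRow_add h, aSign_add h, ← pow_add]

lemma mul_self_triple {R : Type*} [CommRing R] {a b c : R}
    (ha : a * a = 1) (hb : b * b = 1) (hc : c * c = 1) : (a * b * c) * (a * b * c) = 1 := by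
  calc (a * b * c) * (a * b * c) = (a * a) * ((b * b) * (c * c)) := by ring
  _ = 1 := by rw [ha, hb, hc]; ring

lemma sbeta_mul_self (p q : YPart) : sbeta p q * sbeta p q = 1 := by
  unfold sbeta salpha aSign
  exact mul_self_triple (neg_one_pow_mul_self _) (neg_one_pow_mul_self _) (neg_one_pow_mul_self _)

lemma aconj_mul_self (p : YPart) : aconj p * aconj p = 1 := by
  unfold aconj aSign
  exact neg_one_pow_mul_self _

lemma sum_range_add_part {p : YPart} {c : ℕ} (h : Addable p c) (t : ℕ) :
    ∑ j ∈ Finset.range (t + 1), (add p c).part j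
      = (∑ j ∈ Finset.range (t + 1), p.part j) + if c ≤ t then 1 else 0 := by
  simp only [add_part h]
  rw [Finset.sum_add_distrib]
  congr 1
  rw [Finset.sum_ite_eq' (Finset.range (t + 1)) c (fun _ => 1)]
  simp [Nat.lt_succ_iff]

lemma sum_range_sub_part {p : YPart} {r : ℕ} (h : Removable p r) :
    (∑ j ∈ Finset.range (r + 1), (sub p r).part j) + 1
      = ∑ j ∈ Finset.range (r + 1), p.part j := by
  conv_rhs => rw [← add_sub h]
  rw [sum_range_add_part (addable_sub h) r, if_pos (le_refl r)]

end YPart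
namespace YPart

lemma addable_lt {p : YPart} {N r : ℕ} (hN : ∀ n, N ≤ n → p.part n = 0)
    (h : Addable p r) : r < N + 1 := by
  rcases h with h0 | hlt
  · omega
  · by_contra hc
    push_neg at hc
    have h1 := hN (r - 1) (by omega)
    omega

lemma removable_lt {p : YPart} {N r : ℕ} (hN : ∀ n, N ≤ n → p.part n = 0)
    (h : Removable p r) : r < N := by
  unfold Removable at h
  by_contra hc
  push_neg at hc
  have h1 := hN r (by omega)
  omega

lemma upSum {M : Type*} [AddCommMonoid M] {p : YPart} {B : ℕ}
    (hB : ∀ r, Addable p r → r < B) (F : YPart → M) :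
    ∑ᶠ z ∈ {z : YPart | p ⋖ z}, F z
      = ∑ r ∈ (Finset.range B).filter (Addable p), F (add p r) := by
  have hset : {z : YPart | p ⋖ z}
      = ↑(((Finset.range B).filter (Addable p)).image (add p)) := by
    ext z
    simp only [Set.mem_setOf_eq, Finset.coe_image, Set.mem_image, Finset.mem_coe,
      Finset.mem_filter, Finset.mem_range]
    rw [covBy_iff]
    constructor
    · rintro ⟨r, hA, rfl⟩
      exact ⟨r, ⟨hB r hA, hA⟩, rfl⟩
    · rintro ⟨r, ⟨_, hA⟩, rfl⟩
      exact ⟨r, hA, rfl⟩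
  rw [hset, finsum_mem_coe_finset]
  apply Finset.sum_image
  intro r hr s hs heq
  simp only [Finset.mem_coe, Finset.mem_filter, Finset.mem_range] at hr hs
  have h1 : (add p r).part r = (add p s).part r := by rw [heq]
  rw [add_part hr.2, add_part hs.2, if_pos rfl] at h1
  by_contra hne
  rw [if_neg hne] at h1
  omega

lemma downSum {M : Type*} [AddCommMonoid M] {p : YPart} {B : ℕ}
    (hB : ∀ r, Removable p r → r < B) (F : YPart → M) :
    ∑ᶠ x ∈ {x : YPart | x ⋖ p}, F x
      = ∑ r ∈ (Finset.range B).filter (Removable p), F (sub p r) := by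
  have hset : {x : YPart | x ⋖ p}
      = ↑(((Finset.range B).filter (Removable p)).image (sub p)) := by
    ext x
    simp only [Set.mem_setOf_eq, Finset.coe_image, Set.mem_image, Finset.mem_coe,
      Finset.mem_filter, Finset.mem_range]
    rw [covBy_iff']
    constructor
    · rintro ⟨r, hR, rfl⟩
      exact ⟨r, ⟨hB r hR, hR⟩, rfl⟩
    · rintro ⟨r, ⟨_, hR⟩, rfl⟩
      exact ⟨r, hR, rfl⟩
  rw [hset, finsum_mem_coe_finset]
  apply Finset.sum_image
  intro r hr s hs heq
  simp only [Finset.mem_coe, Finset.mem_filter, Finset.mem_range] at hr hs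
  have h1 : (sub p r).part r = (sub p s).part r := by rw [heq]
  have hpos := removable_pos hr.2
  rw [sub_part hr.2, sub_part hs.2, if_pos rfl] at h1
  by_contra hne
  rw [if_neg hne] at h1
  omega

/-- The shift `r ↦ r+1` identifies removable corners with nonzero addable corners. -/
lemma addable_filter_eq {p : YPart} {N : ℕ} (hN : ∀ n, N ≤ n → p.part n = 0) :
    (Finset.range (N + 1)).filter (Addable p)
      = insert 0 (((Finset.range (N + 1)).filter (Removable p)).image (· + 1)) := by
  ext s
  simp only [Finset.mem_insert, Finset.mem_image, Finset.mem_filter, Finset.mem_range]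
  constructor
  · rintro ⟨hs, hA⟩
    rcases eq_or_ne s 0 with h0 | h0
    · exact Or.inl h0
    · refine Or.inr ⟨s - 1, ⟨by omega, ?_⟩, by omega⟩
      rcases hA with h | h
      · omega
      · unfold Removable
        have h2 : s - 1 + 1 = s := by omega
        rw [h2]
        exact h
  · rintro (h0 | ⟨r, ⟨hr, hR⟩, rfl⟩)
    · subst h0
      exact ⟨by omega, addable_zero p⟩
    · have := removable_lt hN hR
      refine ⟨by omega, Or.inr ?_⟩
      simpa [Removable] using hR

lemma part2 (K : Type*) [Field K] :
    SDP.Dop K YPart.sbeta YPart.aconj (fun _ => 1) -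
        SDP.Uop K YPart.sbeta (fun _ => 1) = (fun _ => (1 : K)) := by
  funext p
  simp only [Pi.sub_apply, SDP.Dop, SDP.Uop]
  obtain ⟨N, hN⟩ := p.finite'
  rw [upSum (B := N + 1) (fun r h => addable_lt hN h)
    (fun z => (sbeta p z : K) * (aconj z : K) * (aconj p : K) * (fun _ => (1 : K)) z)]
  rw [downSum (B := N + 1) (fun r h => (removable_lt hN h).trans (by omega))
    (fun x => (sbeta x p : K) * (fun _ => (1 : K)) x)]
  set t : ℕ → K := fun r => (-1 : K) ^ (r + ∑ j ∈ Finset.range r, p.part j) with ht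
  have hD : ∀ r ∈ (Finset.range (N + 1)).filter (Addable p),
      (sbeta p (add p r) : K) * (aconj (add p r) : K) * (aconj p : K)
        * (fun _ => (1 : K)) (add p r) = t r := by
    intro r hr
    simp only [Finset.mem_filter] at hr
    have hA := hr.2
    have key : (sbeta p (add p r) * (aconj (add p r) * aconj p) : ℤ)
        = (-1) ^ (r + ∑ j ∈ Finset.range r, p.part j) := by
      rw [sbeta_add hA, aconj_add hA, ← pow_add]
      apply neg_one_pow_congr
      rw [Finset.sum_range_succ]
      omega
    have key2 := congrArg (fun z : ℤ => (z : K)) key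
    push_cast at key2
    rw [ht]
    dsimp only
    rw [mul_one]
    calc (sbeta p (add p r) : K) * (aconj (add p r) : K) * (aconj p : K)
        = (sbeta p (add p r) : K) * ((aconj (add p r) : K) * (aconj p : K)) := by ring
    _ = (-1 : K) ^ (r + ∑ j ∈ Finset.range r, p.part j) := key2
  have hU : ∀ r ∈ (Finset.range (N + 1)).filter (Removable p),
      (sbeta (sub p r) p : K) * (fun _ => (1 : K)) (sub p r) = t (r + 1) := by
    intro r hr
    simp only [Finset.mem_filter] at hr
    have hR := hr.2
    have key : (sbeta (sub p r) p : ℤ) = (-1) ^ (r + 1 + ∑ j ∈ Finset.range (r + 1), p.part j) := by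
      have e1 : sbeta (sub p r) p = sbeta (sub p r) (add (sub p r) r) := by
        rw [add_sub hR]
      rw [e1, sbeta_add (addable_sub hR)]
      apply neg_one_pow_congr
      have := sum_range_sub_part hR
      omega
    have key2 := congrArg (fun z : ℤ => (z : K)) key
    push_cast at key2
    rw [ht]
    dsimp only
    rw [mul_one]
    exact key2
  rw [Finset.sum_congr rfl hD, Finset.sum_congr rfl hU]
  rw [addable_filter_eq hN]
  rw [Finset.sum_insert (by simp), Finset.sum_image (by intro a _ b _ h; simp only at h; omega)]
  simp only [ht]
  rw [add_sub_cancel_right]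
  simp

end YPart
namespace YPart

lemma neg_one_pow_neg {R : Type*} [Monoid R] [HasDistribNeg R] {a b : ℕ}
    (h : (a + b) % 2 = 1) : ((-1 : R)) ^ a = -(-1) ^ b := by
  have h1 : ((-1 : R)) ^ (b + 1) = -(-1) ^ b := by
    rw [pow_succ, mul_neg_one]
  rw [← h1]
  exact neg_one_pow_congr (by omega)

/-- The combinatorial heart: the two ways of seeing an off-diagonal pair. -/
lemma cond_equiv {y : YPart} {r s : ℕ} (hrs : s ≠ r) :
    (Removable y r ∧ Addable (sub y r) s) ↔ (Addable y s ∧ Removable (add y s) r) := by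
  constructor
  · rintro ⟨h1, h2⟩
    have hsub : ∀ i, (sub y r).part i = y.part i - if i = r then 1 else 0 := sub_part h1
    have hR : y.part (r + 1) < y.part r := h1
    have hA : Addable y s := by
      rcases h2 with h0 | hlt
      · exact Or.inl h0
      · rw [hsub, hsub] at hlt
        rcases eq_or_ne (s - 1) r with he | he
        · have hs1 : s = r + 1 := by omega
          rw [hs1] at hlt ⊢
          rw [if_neg (show ¬(r + 1 = r) by omega),
            if_pos (show r + 1 - 1 = r by omega)] at hlt
          refine Or.inr ?_
          rw [show r + 1 - 1 = r from by omega]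
          omega
        · rw [if_neg hrs, if_neg he] at hlt
          exact Or.inr (by omega)
    refine ⟨hA, ?_⟩
    show (add y s).part (r + 1) < (add y s).part r
    rw [add_part hA, add_part hA, if_neg (show ¬(r = s) from fun hh => hrs hh.symm)]
    rcases eq_or_ne (r + 1) s with he | he
    · rw [if_pos he]
      rcases h2 with h0 | hlt
      · omega
      · rw [hsub, hsub] at hlt
        rw [← he] at hlt
        rw [if_neg (show ¬(r + 1 = r) by omega),
          if_pos (show r + 1 - 1 = r by omega)] at hlt
        rw [show r + 1 - 1 = r from by omega] at hlt
        omega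
    · rw [if_neg he]
      omega
  · rintro ⟨h1, h2⟩
    have hadd : ∀ i, (add y s).part i = y.part i + if i = s then 1 else 0 := add_part h1
    have h2' : (add y s).part (r + 1) < (add y s).part r := h2
    rw [hadd, hadd, if_neg (show ¬(r = s) from fun hh => hrs hh.symm)] at h2'
    have hR : Removable y r := by
      show y.part (r + 1) < y.part r
      rcases eq_or_ne (r + 1) s with he | he
      · rw [if_pos he] at h2'
        omega
      · rw [if_neg he] at h2'
        omega
    refine ⟨hR, ?_⟩
    have hsub : ∀ i, (sub y r).part i = y.part i - if i = r then 1 else 0 := sub_part hR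
    have hRpos : 0 < y.part r := removable_pos hR
    rcases eq_or_ne (s - 1) r with he | he
    · have hs1 : s = r + 1 := by omega
      rw [if_pos hs1.symm] at h2'
      refine Or.inr ?_
      rw [hsub, hsub, if_neg hrs, if_pos he, hs1]
      rw [show r + 1 - 1 = r from by omega]
      omega
    · rcases h1 with h0 | hlt
      · exact Or.inl h0
      · refine Or.inr ?_
        rw [hsub, hsub, if_neg hrs, if_neg he]
        omega

lemma add_add_comm {x : YPart} {r s : ℕ}
    (hr : Addable x r) (hs : Addable x s)
    (hrs : Addable (add x r) s) (hsr : Addable (add x s) r) :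
    add (add x r) s = add (add x s) r := by
  apply ypext
  intro i
  rw [add_part hrs, add_part hr, add_part hsr, add_part hs]
  omega

lemma part_add_ne {x : YPart} {r s : ℕ} (hr : Addable x r) (hne : s ≠ r) :
    (add x r).part s = x.part s := by
  rw [add_part hr, if_neg hne]
  omega

/-- Sign identity for the off-diagonal cancellation (base form). -/
lemma offdiag_sign {x : YPart} {r s : ℕ} (hxr : Addable x r) (hxs : Addable x s)
    (hrs : s ≠ r) (h1 : Addable (add x r) s) (h2 : Addable (add x s) r) :
    sbeta x (add x r) * (sbeta x (add x s) * (aconj (add x s) * aconj x))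
      = -(sbeta (add x r) (add (add x r) s) * (aconj (add (add x r) s) * aconj (add x r))
          * sbeta (add x s) (add (add x s) r)) := by
  have e1 : aconj (add (add x r) s) * aconj (add x r) = (-1) ^ ((add x r).part s) :=
    aconj_add h1
  rw [part_add_ne hxr hrs] at e1
  rw [sbeta_add hxr, sbeta_add hxs, aconj_add hxs, sbeta_add h1, sbeta_add h2, e1,
    sum_range_add_part hxr s, sum_range_add_part hxs r]
  rw [← pow_add, ← pow_add, ← pow_add, ← pow_add]
  apply neg_one_pow_neg
  rcases Nat.lt_or_ge r s with hlt | hge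
  · rw [if_pos (by omega : r ≤ s), if_neg (by omega : ¬ s ≤ r)]
    omega
  · have hlt : s < r := by omega
    rw [if_neg (by omega : ¬ r ≤ s), if_pos (by omega : s ≤ r)]
    omega

/-- Identity (A): sum of `(-1)^{column}` over addable corners minus over removable
corners equals 1. -/
lemma identityA (K : Type*) [Field K] {y : YPart} {N M : ℕ}
    (hN : ∀ n, N ≤ n → y.part n = 0) (hNM : N < M) :
    ∑ r ∈ (Finset.range M).filter (Addable y), ((-1 : K)) ^ (y.part r)
      = 1 + ∑ r ∈ (Finset.range M).filter (Removable y), (-1 : K) ^ (y.part r) := by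
  classical
  have hzne : {i : ℕ | y.part i = 0}.Nonempty := ⟨N, hN N le_rfl⟩
  set s₀ := sInf {i : ℕ | y.part i = 0} with hs₀def
  have hs0 : y.part s₀ = 0 := Nat.sInf_mem hzne
  have hs0le : s₀ ≤ N := Nat.sInf_le (hN N le_rfl)
  have hs0A : Addable y s₀ := by
    rcases Nat.eq_zero_or_pos s₀ with h0 | h0
    · exact Or.inl h0
    · refine Or.inr ?_
      have hne : s₀ - 1 ∉ {i : ℕ | y.part i = 0} :=
        Nat.notMem_of_lt_sInf (show s₀ - 1 < s₀ by omega)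
      simp only [Set.mem_setOf_eq] at hne
      omega
  set m : ℕ → ℕ := fun r => sInf {i : ℕ | y.part i = y.part r} with hmdef
  have hm_mem : ∀ r, y.part (m r) = y.part r := fun r =>
    Nat.sInf_mem (⟨r, rfl⟩ : {i : ℕ | y.part i = y.part r}.Nonempty)
  have hm_le : ∀ r, m r ≤ r := fun r => Nat.sInf_le rfl
  have hm_add : ∀ r, Addable y (m r) := by
    intro r
    rcases Nat.eq_zero_or_pos (m r) with h0 | h0
    · exact Or.inl h0
    · refine Or.inr ?_
      have hne : m r - 1 ∉ {i : ℕ | y.part i = y.part r} :=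
        Nat.notMem_of_lt_sInf (show m r - 1 < m r by omega)
      simp only [Set.mem_setOf_eq] at hne
      have hmono : y.part (m r) ≤ y.part (m r - 1) := y.antitone' (by omega)
      have := hm_mem r
      omega
  have hset : (Finset.range M).filter (Addable y)
      = insert s₀ (((Finset.range M).filter (Removable y)).image m) := by
    ext s
    simp only [Finset.mem_insert, Finset.mem_image, Finset.mem_filter, Finset.mem_range]
    constructor
    · rintro ⟨hsM, hsA⟩
      rcases Nat.eq_zero_or_pos (y.part s) with h0 | h0
      · -- s is the unique addable row with zero part: s = s₀
        left
        have h1 : s₀ ≤ s := Nat.sInf_le h0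
        rcases Nat.eq_zero_or_pos s with hz | hz
        · omega
        · have h2 : y.part (s - 1) > y.part s := by
            rcases hsA with h | h
            · omega
            · exact h
          -- minimality of s among zeros: from i < s we get y.part i > 0
          have h3 : ∀ i, i < s → y.part i ≠ 0 := by
            intro i hi
            have := y.antitone' (show s - 1 ≥ i by omega)  -- y.part (s-1) ≤ y.part i? antitone: i ≤ s-1 → part (s-1) ≤ part i
            omega
          by_contra hne
          exact h3 s₀ (by omega) hs0
      · -- positive part: s = m r for the removable corner r at the bottom of its block
        right
        have hne2 : {i : ℕ | y.part (i + 1) < y.part s}.Nonempty := by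
          refine ⟨N, ?_⟩
          have := hN (N + 1) (by omega)
          simpa [this] using h0
        set r := sInf {i : ℕ | y.part (i + 1) < y.part s} with hrdef
        have hrmem : y.part (r + 1) < y.part s := Nat.sInf_mem hne2
        have hsr : s ≤ r := by
          by_contra hc
          push_neg at hc
          have : y.part s ≤ y.part (r + 1) := y.antitone' (by omega)
          omega
        have hrval : y.part r = y.part s := by
          rcases eq_or_ne r s with he | he
          · rw [he]
          · have h4 : y.part r ≤ y.part s := y.antitone' hsr
            have h5 : r - 1 ∉ {i : ℕ | y.part (i + 1) < y.part s} :=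
              Nat.notMem_of_lt_sInf (show r - 1 < r by omega)
            simp only [Set.mem_setOf_eq, not_lt] at h5
            rw [show r - 1 + 1 = r from by omega] at h5
            omega
        have hrRem : Removable y r := by
          show y.part (r + 1) < y.part r
          omega
        have hrM : r < M := by
          have : y.part r ≠ 0 := by omega
          by_contra hc
          push_neg at hc
          exact this (hN r (by omega))
        refine ⟨r, ⟨hrM, hrRem⟩, ?_⟩
        -- m r = s
        have h6 : m r ≤ s :=
          Nat.sInf_le (show s ∈ {i : ℕ | y.part i = y.part r} from hrval.symm)
        have h7 : ∀ i, i < s → y.part i ≠ y.part r := by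
          intro i hi
          rcases hsA with h | h
          · omega
          · have := y.antitone' (show i ≤ s - 1 by omega)
            omega
        by_contra hne
        exact h7 (m r) (by omega) (hm_mem r)
    · rintro (h0 | ⟨r, ⟨hrM, hrR⟩, rfl⟩)
      · subst h0
        exact ⟨by omega, hs0A⟩
      · have := hm_le r
        exact ⟨by omega, hm_add r⟩
  rw [hset]
  rw [Finset.sum_insert ?notmem]
  case notmem =>
    intro hmem
    simp only [Finset.mem_image, Finset.mem_filter, Finset.mem_range] at hmem
    obtain ⟨r, ⟨-, hrR⟩, he⟩ := hmem
    have h1 := hm_mem r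
    have h2 := removable_pos hrR
    rw [he] at h1
    omega
  rw [Finset.sum_image ?inj]
  case inj =>
    intro a ha b hb he
    simp only [Finset.mem_coe, Finset.mem_filter, Finset.mem_range] at ha hb
    have h1 := hm_mem a
    have h2 := hm_mem b
    rw [he] at h1
    by_contra hne
    rcases Nat.lt_or_ge a b with hab | hab
    · have h3 : y.part b ≤ y.part (a + 1) := y.antitone' (by omega)
      have h4 : y.part (a + 1) < y.part a := ha.2
      omega
    · have hba : b < a := by omega
      have h3 : y.part a ≤ y.part (b + 1) := y.antitone' (by omega)
      have h4 : y.part (b + 1) < y.part b := hb.2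
      omega
  rw [hs0, pow_zero]
  congr 1
  apply Finset.sum_congr rfl
  intro r _
  rw [hm_mem r]

end YPart
namespace YPart

lemma part1 (K : Type*) [Field K] (f : YPart → K) :
    SDP.Uop K sbeta (SDP.Dop K sbeta aconj f) +
      SDP.Dop K sbeta aconj (SDP.Uop K sbeta f) = f := by
  classical
  funext y
  obtain ⟨N, hN⟩ := y.finite'
  set M := N + 2 with hMdef
  have hRy : ∀ r, Removable y r → r < M := fun r h => by
    have := removable_lt hN h; omega
  have hAy : ∀ r, Addable y r → r < M := fun r h => by
    have := addable_lt hN h; omega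
  have hsubN : ∀ r, Removable y r → ∀ n, N ≤ n → (sub y r).part n = 0 := by
    intro r h n hn
    rw [sub_part h]
    have := hN n hn
    omega
  have haddN : ∀ s, Addable y s → ∀ n, N + 1 ≤ n → (add y s).part n = 0 := by
    intro s h n hn
    rw [add_part h]
    have h1 := hN n (by omega)
    have h2 : n ≠ s := by have := addable_lt hN h; omega
    rw [if_neg h2]
    omega
  set u : ℕ → ℕ → K := fun r s =>
    if Removable y r ∧ Addable (sub y r) s then
      (sbeta (sub y r) y : K) *
        ((sbeta (sub y r) (add (sub y r) s) : K) * (aconj (add (sub y r) s) : K) *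
          (aconj (sub y r) : K) * f (add (sub y r) s))
    else 0 with hu
  set v : ℕ → ℕ → K := fun s r =>
    if Addable y s ∧ Removable (add y s) r then
      (sbeta y (add y s) : K) * (aconj (add y s) : K) * (aconj y : K) *
        ((sbeta (sub (add y s) r) (add y s) : K) * f (sub (add y s) r))
    else 0 with hv
  have hUD : SDP.Uop K sbeta (SDP.Dop K sbeta aconj f) y
      = ∑ r ∈ Finset.range M, ∑ s ∈ Finset.range M, u r s := by
    show (∑ᶠ x ∈ {x : YPart | x ⋖ y}, (sbeta x y : K) * SDP.Dop K sbeta aconj f x) = _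
    rw [downSum hRy (fun x => (sbeta x y : K) * SDP.Dop K sbeta aconj f x)]
    rw [Finset.sum_filter]
    apply Finset.sum_congr rfl
    intro r _
    by_cases hRem : Removable y r
    · rw [if_pos hRem]
      have hDx : SDP.Dop K sbeta aconj f (sub y r)
          = ∑ s ∈ Finset.range M, (if Addable (sub y r) s then
              (sbeta (sub y r) (add (sub y r) s) : K) * (aconj (add (sub y r) s) : K) *
                (aconj (sub y r) : K) * f (add (sub y r) s) else 0) := by
        show (∑ᶠ z ∈ {z : YPart | (sub y r) ⋖ z},
            (sbeta (sub y r) z : K) * (aconj z : K) * (aconj (sub y r) : K) * f z) = _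
        rw [upSum (B := M) (fun t ht => by have := addable_lt (hsubN r hRem) ht; omega)
          (fun z => (sbeta (sub y r) z : K) * (aconj z : K) * (aconj (sub y r) : K) * f z)]
        rw [Finset.sum_filter]
      rw [hDx, Finset.mul_sum]
      apply Finset.sum_congr rfl
      intro s _
      rw [hu]
      dsimp only
      by_cases hAx : Addable (sub y r) s
      · rw [if_pos hAx, if_pos (show Removable y r ∧ Addable (sub y r) s from ⟨hRem, hAx⟩)]
      · rw [if_neg hAx, if_neg (fun hc : Removable y r ∧ Addable (sub y r) s => hAx hc.2),
          mul_zero]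
    · rw [if_neg hRem]
      symm
      apply Finset.sum_eq_zero
      intro s _
      rw [hu]
      dsimp only
      rw [if_neg (fun hc : Removable y r ∧ Addable (sub y r) s => hRem hc.1)]
  have hDU : SDP.Dop K sbeta aconj (SDP.Uop K sbeta f) y
      = ∑ s ∈ Finset.range M, ∑ r ∈ Finset.range M, v s r := by
    show (∑ᶠ z ∈ {z : YPart | y ⋖ z},
        (sbeta y z : K) * (aconj z : K) * (aconj y : K) * SDP.Uop K sbeta f z) = _
    rw [upSum hAy
      (fun z => (sbeta y z : K) * (aconj z : K) * (aconj y : K) * SDP.Uop K sbeta f z)]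
    rw [Finset.sum_filter]
    apply Finset.sum_congr rfl
    intro s _
    by_cases hAdd : Addable y s
    · rw [if_pos hAdd]
      have hUz : SDP.Uop K sbeta f (add y s)
          = ∑ r ∈ Finset.range M, (if Removable (add y s) r then
              (sbeta (sub (add y s) r) (add y s) : K) * f (sub (add y s) r) else 0) := by
        show (∑ᶠ x ∈ {x : YPart | x ⋖ (add y s)}, (sbeta x (add y s) : K) * f x) = _
        rw [downSum (B := M) (fun t ht => by have := removable_lt (haddN s hAdd) ht; omega)
          (fun x => (sbeta x (add y s) : K) * f x)]
        rw [Finset.sum_filter]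
      rw [hUz, Finset.mul_sum]
      apply Finset.sum_congr rfl
      intro r _
      rw [hv]
      dsimp only
      by_cases hRw : Removable (add y s) r
      · rw [if_pos hRw, if_pos (show Addable y s ∧ Removable (add y s) r from ⟨hAdd, hRw⟩)]
      · rw [if_neg hRw, if_neg (fun hc : Addable y s ∧ Removable (add y s) r => hRw hc.2),
          mul_zero]
    · rw [if_neg hAdd]
      symm
      apply Finset.sum_eq_zero
      intro r _
      rw [hv]
      dsimp only
      rw [if_neg (fun hc : Addable y s ∧ Removable (add y s) r => hAdd hc.1)]
  have hkey : ∀ r s : ℕ, s ≠ r → u r s = - v s r := by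
    intro r s hrs
    rw [hu, hv]
    dsimp only
    by_cases hC : Removable y r ∧ Addable (sub y r) s
    · have hC2 : Addable y s ∧ Removable (add y s) r := (cond_equiv hrs).mp hC
      rw [if_pos hC, if_pos hC2]
      obtain ⟨hRyr, hxs⟩ := hC
      obtain ⟨hys, hwr⟩ := hC2
      have hxr : Addable (sub y r) r := addable_sub hRyr
      have e_arg : sub (add y s) r = add (sub y r) s := by
        apply ypext
        intro i
        rw [sub_part hwr, add_part hys, add_part hxs, sub_part hRyr]
        have := removable_pos hRyr
        split_ifs <;> omega
      have h2' : Addable (add (sub y r) s) r := by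
        rw [← e_arg]
        exact addable_sub hwr
      rw [e_arg]
      generalize hxg : sub y r = x at hxs hxr h2' ⊢
      have e_y : add x r = y := by rw [← hxg]; exact add_sub hRyr
      rw [← e_y]
      have h1 : Addable (add x r) s := by rw [e_y]; exact hys
      have hcomm : add (add x r) s = add (add x s) r := add_add_comm hxr hxs h1 h2'
      have hz := offdiag_sign hxr hxs hrs h1 h2'
      rw [← hcomm] at hz
      have hzK := congrArg (fun t : ℤ => (t : K)) hz
      push_cast at hzK
      linear_combination f (add x s) * hzK
    · have hC2 : ¬ (Addable y s ∧ Removable (add y s) r) :=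
        fun hc => hC ((cond_equiv hrs).mpr hc)
      rw [if_neg hC, if_neg hC2, neg_zero]
  have hdiagU : ∀ r : ℕ, u r r
      = (if Removable y r then -((-1 : K) ^ (y.part r)) else 0) * f y := by
    intro r
    rw [hu]
    dsimp only
    by_cases hRem : Removable y r
    · rw [if_pos (show Removable y r ∧ Addable (sub y r) r from ⟨hRem, addable_sub hRem⟩),
        if_pos hRem]
      have e_y : add (sub y r) r = y := add_sub hRem
      rw [e_y]
      have hq : (sbeta (sub y r) y * sbeta (sub y r) y : ℤ) = 1 := sbeta_mul_self _ _
      have ha := aconj_add (addable_sub hRem)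
      rw [e_y] at ha
      have hp : (sub y r).part r = y.part r - 1 := by
        rw [sub_part hRem, if_pos rfl]
      have hpow : ((-1 : K)) ^ ((sub y r).part r) = -((-1 : K) ^ (y.part r)) := by
        rw [hp]
        apply neg_one_pow_neg
        have := removable_pos hRem
        omega
      have hqK := congrArg (fun t : ℤ => (t : K)) hq
      have haK := congrArg (fun t : ℤ => (t : K)) ha
      push_cast at hqK haK
      calc (sbeta (sub y r) y : K) *
          ((sbeta (sub y r) y : K) * (aconj y : K) * (aconj (sub y r) : K) * f y)
          = ((sbeta (sub y r) y : K) * (sbeta (sub y r) y : K)) *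
            ((aconj y : K) * (aconj (sub y r) : K)) * f y := by ring
        _ = 1 * ((-1 : K)) ^ ((sub y r).part r) * f y := by rw [hqK, haK]
        _ = -((-1 : K) ^ (y.part r)) * f y := by rw [hpow]; ring
    · rw [if_neg (fun hc : Removable y r ∧ Addable (sub y r) r => hRem hc.1),
        if_neg hRem, zero_mul]
  have hdiagV : ∀ r : ℕ, v r r
      = (if Addable y r then ((-1 : K) ^ (y.part r)) else 0) * f y := by
    intro r
    rw [hv]
    dsimp only
    by_cases hAdd : Addable y r
    · rw [if_pos (show Addable y r ∧ Removable (add y r) r from ⟨hAdd, removable_add hAdd⟩),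
        if_pos hAdd]
      have e_y : sub (add y r) r = y := sub_add hAdd
      rw [e_y]
      have hq : (sbeta y (add y r) * sbeta y (add y r) : ℤ) = 1 := sbeta_mul_self _ _
      have ha : (aconj (add y r) * aconj y : ℤ) = (-1) ^ (y.part r) := aconj_add hAdd
      have hqK := congrArg (fun t : ℤ => (t : K)) hq
      have haK := congrArg (fun t : ℤ => (t : K)) ha
      push_cast at hqK haK
      calc (sbeta y (add y r) : K) * (aconj (add y r) : K) * (aconj y : K) *
          ((sbeta y (add y r) : K) * f y)
          = ((sbeta y (add y r) : K) * (sbeta y (add y r) : K)) *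
            ((aconj (add y r) : K) * (aconj y : K)) * f y := by ring
        _ = 1 * ((-1 : K)) ^ (y.part r) * f y := by rw [hqK, haK]
        _ = ((-1 : K)) ^ (y.part r) * f y := by ring
    · rw [if_neg (fun hc : Addable y r ∧ Removable (add y r) r => hAdd hc.1),
        if_neg hAdd, zero_mul]
  rw [Pi.add_apply, hUD, hDU]
  rw [Finset.sum_comm (s := Finset.range M) (t := Finset.range M) (f := fun s r => v s r)]
  rw [← Finset.sum_add_distrib]
  have hinner : ∀ r ∈ Finset.range M,
      ((∑ s ∈ Finset.range M, u r s) + ∑ s ∈ Finset.range M, v s r)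
        = u r r + v r r := by
    intro r hrM
    rw [← Finset.sum_add_distrib]
    have hpt : ∀ s ∈ Finset.range M,
        (u r s + v s r) = if s = r then u r r + v r r else 0 := by
      intro s _
      rcases eq_or_ne s r with he | he
      · rw [if_pos he, he]
      · rw [if_neg he, hkey r s he]; ring
    rw [Finset.sum_congr rfl hpt, Finset.sum_ite_eq' (Finset.range M) r
      (fun _ => u r r + v r r), if_pos hrM]
  rw [Finset.sum_congr rfl hinner]
  have hdiag : ∀ r ∈ Finset.range M, u r r + v r r
      = ((if Addable y r then ((-1 : K)) ^ (y.part r) else 0)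
        + (if Removable y r then -((-1 : K) ^ (y.part r)) else 0)) * f y := by
    intro r _
    rw [hdiagU r, hdiagV r]
    ring
  rw [Finset.sum_congr rfl hdiag]
  rw [← Finset.sum_mul]
  have e1 : ∑ r ∈ Finset.range M, (if Addable y r then ((-1 : K)) ^ (y.part r) else 0)
      = ∑ r ∈ (Finset.range M).filter (Addable y), ((-1 : K)) ^ (y.part r) :=
    (Finset.sum_filter _ _).symm
  have e2 : ∑ r ∈ Finset.range M, (if Removable y r then -((-1 : K) ^ (y.part r)) else 0)
      = -∑ r ∈ (Finset.range M).filter (Removable y), ((-1 : K)) ^ (y.part r) := by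
    rw [← Finset.sum_neg_distrib]
    exact (Finset.sum_filter _ _).symm
  rw [Finset.sum_add_distrib, e1, e2, identityA K hN (by omega)]
  ring

end YPart
/-- `Y_β = (Y, s_β, a')` is a β-signed differential poset:
`UD + DU = I` on `K̂Y` and `(D − U)𝐘 = 𝐘`. -/
theorem statement11 (K : Type*) [Field K] [CharZero K] :
    (∀ f : YPart → K,
      SDP.Uop K YPart.sbeta (SDP.Dop K YPart.sbeta YPart.aconj f) +
        SDP.Dop K YPart.sbeta YPart.aconj (SDP.Uop K YPart.sbeta f) = f) ∧
    (SDP.Dop K YPart.sbeta YPart.aconj (fun _ => 1) -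
        SDP.Uop K YPart.sbeta (fun _ => 1) = (fun _ => (1 : K))) := by
  exact ⟨fun f => YPart.part1 K f, YPart.part2 K⟩
end

section
/- Let P be a finite poset with n elements and a minimum element, and let ω : P → {1,…,n} be any bijective labeling. If P is domino-tileable, then I_{P,ω} = ∑_D sign(π(f_D)), the sum over all domino tilings D of P. If P is not domino-tileable, then I_{P,ω} = 0. -/
open scoped Classical

/-- A domino tiling of a finite poset `P`: an increasing chain of order ideals
`I₀ ⊂ I₁ ⊂ ⋯ ⊂ I_r = P` (recorded as a list) such that each difference
`I_i \ I_{i−1}` is a two-element chain of `P`, and `|I₀| = 1` if `|P|` is odd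
and `|I₀| = 0` if `|P|` is even. -/
def IsDominoTiling {P : Type*} [PartialOrder P] [Fintype P] (l : List (Set P)) : Prop :=
  (∀ A ∈ l, IsLowerSet A) ∧
  l.Chain' (fun A B => A ⊆ B ∧ ∃ a b : P, a < b ∧ B \ A = {a, b}) ∧
  l.getLast? = some (Set.univ : Set P) ∧
  (∃ A : Set P, l.head? = some A ∧ A.ncard = Fintype.card P % 2)

/-- `f` is compatible with the tiling `l` when all its values on `I_{k}` are
smaller than all its values on `I_{k+1} \ I_k`; the linear extension `f_D`
determined by a tiling `D` is the unique compatible linear extension. -/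
def TilingCompatible {P : Type*} [PartialOrder P] [Fintype P]
    (l : List (Set P)) (f : P ≃ Fin (Fintype.card P)) : Prop :=
  ∀ k : ℕ, k + 1 < l.length →
    ∀ a ∈ l.getD k ∅, ∀ b ∈ (l.getD (k + 1) ∅) \ (l.getD k ∅), f a < f b

set_option linter.unusedSectionVars false
set_option maxHeartbeats 1000000

section Aux
variable {P : Type*} [PartialOrder P] [Fintype P]

def GoodF (f : P ≃ Fin (Fintype.card P)) : Prop :=
  ∀ x y : P, (f x : ℕ) % 2 = Fintype.card P % 2 → (f y : ℕ) = (f x : ℕ) + 1 → x < y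

def LfList (f : P ≃ Fin (Fintype.card P)) : List (Set P) :=
  (List.range (Fintype.card P / 2 + 1)).map
    (fun k => {x : P | (f x : ℕ) < Fintype.card P % 2 + 2 * k})

lemma card_eq_mod_add : Fintype.card P % 2 + 2 * (Fintype.card P / 2) = Fintype.card P :=
  Nat.mod_add_div _ _

lemma LfList_length (f : P ≃ Fin (Fintype.card P)) :
    (LfList f).length = Fintype.card P / 2 + 1 := by simp [LfList]

lemma LfList_getD (f : P ≃ Fin (Fintype.card P)) {k : ℕ} (hk : k < Fintype.card P / 2 + 1) :
    (LfList f).getD k ∅ = {x : P | (f x : ℕ) < Fintype.card P % 2 + 2 * k} := by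
  rw [List.getD_eq_getElem _ _ (by simpa [LfList_length] using hk)]
  simp [LfList]

/-- the set of elements with `f`-value below `m` has `m` elements. -/
lemma ncard_fval_lt (f : P ≃ Fin (Fintype.card P)) {m : ℕ} (hm : m ≤ Fintype.card P) :
    {x : P | (f x : ℕ) < m}.ncard = m := by
  have e : {x : P | (f x : ℕ) < m} ≃ Fin m :=
    { toFun := fun x => ⟨f x.1, x.2⟩
      invFun := fun j => ⟨f.symm ⟨j, lt_of_lt_of_le j.2 hm⟩, by simp⟩
      left_inv := fun x => by simp
      right_inv := fun j => by simp }
  rw [← Nat.card_coe_set_eq, Nat.card_congr e, Nat.card_eq_fintype_card, Fintype.card_fin]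

end Aux

section Tiling
variable {P : Type*} [PartialOrder P] [Fintype P] {l : List (Set P)}

lemma tiling_ne_nil (hl : IsDominoTiling l) : l ≠ [] := by
  intro h; rw [h] at hl; simpa using hl.2.2.1

lemma tiling_chain (hl : IsDominoTiling l) {i : ℕ} (hi : i + 1 < l.length) :
    l.getD i ∅ ⊆ l.getD (i+1) ∅ ∧ ∃ a b : P, a < b ∧ l.getD (i+1) ∅ \ l.getD i ∅ = {a, b} := by
  have h := List.isChain_iff_getElem.mp hl.2.1 i (by omega)
  rw [List.getD_eq_getElem _ _ (by omega : i < l.length), List.getD_eq_getElem _ _ hi]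
  simpa [List.get_eq_getElem] using h

lemma tiling_subset (hl : IsDominoTiling l) {i j : ℕ} (hij : i ≤ j) (hj : j < l.length) :
    l.getD i ∅ ⊆ l.getD j ∅ := by
  induction j with
  | zero => simpa [Nat.le_zero.mp hij]
  | succ m ih =>
    rcases Nat.lt_or_ge i (m+1) with h | h
    · exact (ih (by omega) (by omega)).trans (tiling_chain hl hj).1
    · have : i = m + 1 := by omega
      simp [this]

lemma tiling_last (hl : IsDominoTiling l) : l.getD (l.length - 1) ∅ = Set.univ := by
  have hne := tiling_ne_nil hl
  have h := hl.2.2.1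
  rw [List.getLast?_eq_getLast_of_ne_nil hne] at h
  have := Option.some_injective _ h
  rw [List.getD_eq_getElem _ _ (by
    have := List.length_pos_iff.mpr hne; omega)]
  rw [List.getLast_eq_getElem] at this
  exact this

lemma tiling_head (hl : IsDominoTiling l) :
    (l.getD 0 ∅).ncard = Fintype.card P % 2 := by
  obtain ⟨A, hA, hcard⟩ := hl.2.2.2
  have hne := tiling_ne_nil hl
  rw [List.getD_eq_getElem _ _ (List.length_pos_iff.mpr hne)]
  rw [List.head?_eq_head hne] at hA
  have := Option.some_injective _ hA
  rw [List.head_eq_getElem] at this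
  rw [this, hcard]

lemma tiling_ncard (hl : IsDominoTiling l) {k : ℕ} (hk : k < l.length) :
    (l.getD k ∅).ncard = Fintype.card P % 2 + 2 * k := by
  induction k with
  | zero => simpa using tiling_head hl
  | succ m ih =>
    obtain ⟨hsub, a, b, hab, hdiff⟩ := tiling_chain hl hk
    have hs : (l.getD m ∅) ⊆ l.getD (m+1) ∅ := hsub
    have hfin : (l.getD (m+1) ∅).Finite := Set.toFinite _
    have h2 : (l.getD (m+1) ∅ \ l.getD m ∅).ncard = 2 := by
      rw [hdiff, Set.ncard_pair hab.ne]
    have := Set.ncard_diff_add_ncard_of_subset hs hfin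
    rw [h2, ih (by omega)] at this
    omega

lemma tiling_length (hl : IsDominoTiling l) : l.length = Fintype.card P / 2 + 1 := by
  have hne := tiling_ne_nil hl
  have hpos : 0 < l.length := List.length_pos_iff.mpr hne
  have h1 := tiling_ncard hl (k := l.length - 1) (by omega)
  rw [tiling_last hl, Set.ncard_univ, Nat.card_eq_fintype_card] at h1
  have := card_eq_mod_add (P := P)
  omega

end Tiling

section Main
variable {P : Type*} [PartialOrder P] [Fintype P] {l : List (Set P)}
  {f : P ≃ Fin (Fintype.card P)}

lemma tiling_sep (hl : IsDominoTiling l) (hc : TilingCompatible l f) {k : ℕ}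
    (hk : k < l.length) : ∀ a ∈ l.getD k ∅, ∀ b, b ∉ l.getD k ∅ → f a < f b := by
  intro a ha b hb
  have hbu : b ∈ l.getD (l.length - 1) ∅ := by rw [tiling_last hl]; trivial
  have hex : ∃ j, b ∈ l.getD j ∅ := ⟨_, hbu⟩
  set m := Nat.find hex with hm
  have hmem : b ∈ l.getD m ∅ := Nat.find_spec hex
  have hmlt : m < l.length := by
    have := Nat.find_min' hex hbu
    have hpos : 0 < l.length := List.length_pos_iff.mpr (tiling_ne_nil hl)
    omega
  have hkm : k < m := by
    by_contra h
    exact hb (tiling_subset hl (by omega) hk hmem)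
  have hnot : b ∉ l.getD (m - 1) ∅ := Nat.find_min hex (by omega)
  have ham : a ∈ l.getD (m - 1) ∅ :=
    tiling_subset hl (by omega) (by omega) ha
  have := hc (m - 1) (by omega) a ham b (by
    have : m - 1 + 1 = m := by omega
    rw [this]; exact ⟨hmem, hnot⟩)
  exact this

lemma tiling_mem_iff (hl : IsDominoTiling l) (hf : Monotone ⇑f) (hc : TilingCompatible l f)
    {k : ℕ} (hk : k < l.length) (x : P) :
    x ∈ l.getD k ∅ ↔ (f x : ℕ) < Fintype.card P % 2 + 2 * k := by
  constructor
  · intro hx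
    by_contra h
    push_neg at h
    have hsub : {y : P | (f y : ℕ) < (f x : ℕ) + 1} ⊆ l.getD k ∅ := by
      intro y hy
      by_contra hy'
      have := tiling_sep hl hc hk x hx y hy'
      simp only [Set.mem_setOf_eq] at hy
      omega
    have hle := Set.ncard_le_ncard hsub (Set.toFinite _)
    rw [ncard_fval_lt f (by omega), tiling_ncard hl hk] at hle
    omega
  · intro h
    by_contra hx
    have hsub : l.getD k ∅ ⊆ {y : P | (f y : ℕ) < (f x : ℕ)} := by
      intro y hy
      exact tiling_sep hl hc hk y hy x hx
    have hle := Set.ncard_le_ncard hsub (Set.toFinite _)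
    rw [ncard_fval_lt f (by omega), tiling_ncard hl hk] at hle
    omega

lemma tiling_eq_lfList (hl : IsDominoTiling l) (hf : Monotone ⇑f) (hc : TilingCompatible l f) :
    l = LfList f := by
  have hlen : l.length = (LfList f).length := by
    rw [tiling_length hl, LfList_length]
  apply List.ext_getElem hlen
  intro i h1 h2
  have e1 : l[i] = l.getD i ∅ := (List.getD_eq_getElem _ _ h1).symm
  have e2 : (LfList f)[i] = (LfList f).getD i ∅ := (List.getD_eq_getElem _ _ h2).symm
  rw [e1, e2, LfList_getD f (by rw [LfList_length] at h2; exact h2)]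
  ext x
  rw [tiling_mem_iff hl hf hc h1 x]
  rfl

lemma lfList_compatible (f : P ≃ Fin (Fintype.card P)) : TilingCompatible (LfList f) f := by
  intro k hk a ha b hb
  rw [LfList_length] at hk
  rw [LfList_getD f (by omega)] at ha
  rw [LfList_getD f (by omega), LfList_getD f (by omega)] at hb
  simp only [Set.mem_setOf_eq, Set.mem_diff, not_lt] at ha hb
  exact Fin.lt_def.mpr (by omega)

lemma goodF_of_tiling (hl : IsDominoTiling (LfList f)) (hf : Monotone ⇑f) : GoodF f := by
  intro x y hmod hy1
  have hp2 : Fintype.card P % 2 < 2 := Nat.mod_lt _ (by omega)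
  have hnp := card_eq_mod_add (P := P)
  have hjp : Fintype.card P % 2 ≤ (f x : ℕ) := by omega
  obtain ⟨k, hk⟩ : ∃ k, (f x : ℕ) = Fintype.card P % 2 + 2 * k :=
    ⟨((f x : ℕ) - Fintype.card P % 2) / 2, by omega⟩
  have hyn : (f y : ℕ) < Fintype.card P := (f y).2
  have hklt : k + 1 < (LfList f).length := by rw [LfList_length]; omega
  obtain ⟨hsub, a, b, hab, hdiff⟩ := tiling_chain hl hklt
  rw [LfList_length] at hklt
  rw [LfList_getD f (by omega), LfList_getD f (by omega)] at hdiff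
  have hxy : x ≠ y := by intro h; rw [h] at hy1; omega
  have hxd : x ∈ ({a, b} : Set P) := by
    rw [← hdiff]
    exact ⟨by show (f x : ℕ) < _; omega, by show ¬ (f x : ℕ) < _; omega⟩
  have hyd : y ∈ ({a, b} : Set P) := by
    rw [← hdiff]
    exact ⟨by show (f y : ℕ) < _; omega, by show ¬ (f y : ℕ) < _; omega⟩
  have hfab : f a < f b := (hf.strictMono_of_injective f.injective) hab
  simp only [Set.mem_insert_iff, Set.mem_singleton_iff] at hxd hyd
  have hyx : ¬ (f y : ℕ) < (f x : ℕ) := by omega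
  rcases hxd with rfl | rfl <;> rcases hyd with rfl | rfl
  · exact absurd rfl hxy
  · exact hab
  · exact absurd (Fin.lt_def.mp hfab) hyx
  · exact absurd rfl hxy

end Main

section Main2
variable {P : Type*} [PartialOrder P] [Fintype P] {f : P ≃ Fin (Fintype.card P)}

lemma lfList_ne_nil (f : P ≃ Fin (Fintype.card P)) : LfList f ≠ [] := by
  have := LfList_length f
  intro h; rw [h] at this; simp at this

lemma lfList_tiling_of_good (hf : Monotone ⇑f) (hg : GoodF f) : IsDominoTiling (LfList f) := by
  have hp2 : Fintype.card P % 2 < 2 := Nat.mod_lt _ (by omega)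
  have hnp := card_eq_mod_add (P := P)
  have hne := lfList_ne_nil f
  refine ⟨?_, ?_, ?_, ?_⟩
  · intro A hA
    simp only [LfList, List.mem_map, List.mem_range] at hA
    obtain ⟨k, _, rfl⟩ := hA
    intro u v hvu hu
    simp only [Set.mem_setOf_eq] at hu ⊢
    have : f v ≤ f u := hf hvu
    have := Fin.le_def.mp this
    omega
  · show List.IsChain _ _
    rw [List.isChain_iff_getElem]
    intro i hi
    rw [LfList_length] at hi
    rw [← List.getD_eq_getElem _ ∅ (by rw [LfList_length]; omega),
      ← List.getD_eq_getElem _ ∅ (by rw [LfList_length]; omega),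
      LfList_getD f (by omega), LfList_getD f (by omega)]
    have h1 : Fintype.card P % 2 + 2 * i + 1 < Fintype.card P := by omega
    have h0 : Fintype.card P % 2 + 2 * i < Fintype.card P := by omega
    set a := f.symm ⟨Fintype.card P % 2 + 2 * i, h0⟩ with ha
    set b := f.symm ⟨Fintype.card P % 2 + 2 * i + 1, h1⟩ with hb
    have hfa : (f a : ℕ) = Fintype.card P % 2 + 2 * i := by rw [ha]; simp
    have hfb : (f b : ℕ) = Fintype.card P % 2 + 2 * i + 1 := by rw [hb]; simp
    have hab : a < b := hg a b (by omega) (by omega)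
    refine ⟨fun z hz => by simp only [Set.mem_setOf_eq] at hz ⊢; omega, a, b, hab, ?_⟩
    ext z
    simp only [Set.mem_diff, Set.mem_setOf_eq, Set.mem_insert_iff, Set.mem_singleton_iff,
      not_lt]
    constructor
    · rintro ⟨hz1, hz2⟩
      rcases Nat.lt_or_ge (f z : ℕ) (Fintype.card P % 2 + 2 * i + 1) with h | h
      · left
        have : f z = f a := Fin.ext (by omega)
        exact f.injective this
      · right
        have : f z = f b := Fin.ext (by omega)
        exact f.injective this
    · rintro (rfl | rfl) <;> omega
  · rw [List.getLast?_eq_getLast_of_ne_nil hne]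
    congr 1
    have hlen : (LfList f).length = Fintype.card P / 2 + 1 := LfList_length f
    rw [List.getLast_eq_getElem, ← List.getD_eq_getElem _ ∅ (by omega : (LfList f).length - 1 < (LfList f).length),
      hlen, LfList_getD f (by omega)]
    ext x
    simp only [Set.mem_setOf_eq, Set.mem_univ, iff_true]
    have := (f x).2
    omega
  · refine ⟨{x : P | (f x : ℕ) < Fintype.card P % 2}, ?_, ?_⟩
    · rw [List.head?_eq_head hne]
      congr 1
      rw [List.head_eq_getElem, ← List.getD_eq_getElem _ ∅ (List.length_pos_iff.mpr hne),
        LfList_getD f (by omega)]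
      norm_num
    · exact ncard_fval_lt f (Nat.mod_le _ _)

end Main2

section Main3
variable {P : Type*} [PartialOrder P] [Fintype P] {l : List (Set P)}
  {f g : P ≃ Fin (Fintype.card P)}

lemma aux_ne (hGf : GoodF f) (hGg : GoodF g)
    (hiff : ∀ k ≤ Fintype.card P / 2, ∀ z : P,
      ((f z : ℕ) < Fintype.card P % 2 + 2 * k ↔ (g z : ℕ) < Fintype.card P % 2 + 2 * k))
    (x : P) (hfx : (f x : ℕ) < (g x : ℕ)) : False := by
  have hp2 : Fintype.card P % 2 < 2 := Nat.mod_lt _ (by omega)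
  have hnp := card_eq_mod_add (P := P)
  have hgn : (g x : ℕ) < Fintype.card P := (g x).2
  have hgp : Fintype.card P % 2 ≤ (g x : ℕ) := by
    by_contra h
    push_neg at h
    have := (hiff 0 (by omega) x).mpr (by omega)
    omega
  set k := ((g x : ℕ) - Fintype.card P % 2) / 2 with hk
  have hkb : Fintype.card P % 2 + 2 * k ≤ (g x : ℕ) ∧
      (g x : ℕ) < Fintype.card P % 2 + 2 * (k + 1) := by omega
  have hk1 : k + 1 ≤ Fintype.card P / 2 := by omega
  have hfxk : Fintype.card P % 2 + 2 * k ≤ (f x : ℕ) := by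
    by_contra h
    push_neg at h
    have := (hiff k (by omega) x).mp h
    omega
  have hfxv : (f x : ℕ) = Fintype.card P % 2 + 2 * k := by
    have := (hiff (k + 1) hk1 x).mpr (by omega)
    omega
  have hgxv : (g x : ℕ) = Fintype.card P % 2 + 2 * k + 1 := by omega
  have hy : Fintype.card P % 2 + 2 * k + 1 < Fintype.card P := by omega
  set y := f.symm ⟨Fintype.card P % 2 + 2 * k + 1, hy⟩ with hydef
  have hfy : (f y : ℕ) = Fintype.card P % 2 + 2 * k + 1 := by rw [hydef]; simp
  have hxy : x ≠ y := by
    intro h; rw [← h] at hfy; omega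
  have hlt1 : x < y := hGf x y (by omega) (by omega)
  have hgy1 : Fintype.card P % 2 + 2 * k ≤ (g y : ℕ) := by
    by_contra h
    push_neg at h
    have := (hiff k (by omega) y).mpr h
    omega
  have hgy2 : (g y : ℕ) < Fintype.card P % 2 + 2 * (k + 1) := by
    have := (hiff (k + 1) hk1 y).mp (by omega)
    omega
  have hgyne : (g y : ℕ) ≠ (g x : ℕ) := by
    intro h
    exact hxy (g.injective (Fin.ext h)).symm
  have hgyv : (g y : ℕ) = Fintype.card P % 2 + 2 * k := by omega
  have hlt2 : y < x := hGg y x (by omega) (by omega)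
  exact lt_asymm hlt1 hlt2

lemma compatible_unique (hl : IsDominoTiling l) (hf : Monotone ⇑f) (hcf : TilingCompatible l f)
    (hg : Monotone ⇑g) (hcg : TilingCompatible l g) : f = g := by
  have hlf := tiling_eq_lfList hl hf hcf
  have hlg := tiling_eq_lfList hl hg hcg
  have hGf : GoodF f := goodF_of_tiling (hlf ▸ hl) hf
  have hGg : GoodF g := goodF_of_tiling (hlg ▸ hl) hg
  have hlen := tiling_length hl
  have hiff : ∀ k ≤ Fintype.card P / 2, ∀ z : P,
      ((f z : ℕ) < Fintype.card P % 2 + 2 * k ↔ (g z : ℕ) < Fintype.card P % 2 + 2 * k) := by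
    intro k hk z
    have h1 : z ∈ (LfList f).getD k ∅ ↔ (f z : ℕ) < Fintype.card P % 2 + 2 * k := by
      rw [LfList_getD f (by omega)]; rfl
    have h2 : z ∈ (LfList g).getD k ∅ ↔ (g z : ℕ) < Fintype.card P % 2 + 2 * k := by
      rw [LfList_getD g (by omega)]; rfl
    rw [← h1, ← h2, ← hlf, ← hlg]
  apply Equiv.ext
  intro x
  by_contra h
  have hne : (f x : ℕ) ≠ (g x : ℕ) := fun h2 => h (Fin.ext h2)
  rcases Nat.lt_or_ge (f x : ℕ) (g x : ℕ) with h1 | h1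
  · exact aux_ne hGf hGg hiff x h1
  · exact aux_ne hGg hGf (fun k hk z => (hiff k hk z).symm) x (by omega)

end Main3

section Main4
variable {P : Type*} [PartialOrder P] [Fintype P] {l : List (Set P)}

lemma compatible_exists (hl : IsDominoTiling l) :
    ∃ f : P ≃ Fin (Fintype.card P), Monotone ⇑f ∧ TilingCompatible l f := by
  classical
  have hlenpos : 0 < l.length := List.length_pos_iff.mpr (tiling_ne_nil hl)
  have hex : ∀ x : P, ∃ j, x ∈ l.getD j ∅ := fun x =>
    ⟨l.length - 1, by rw [tiling_last hl]; trivial⟩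
  obtain ⟨kf, hkf_mem, hkf_min'⟩ : ∃ kf : P → ℕ, (∀ x, x ∈ l.getD (kf x) ∅) ∧
      (∀ x j, x ∈ l.getD j ∅ → kf x ≤ j) :=
    ⟨fun x => Nat.find (hex x), fun x => Nat.find_spec (hex x),
      fun x j h => Nat.find_min' (hex x) h⟩
  have hkf_lt : ∀ x, kf x < l.length := fun x => by
    have := hkf_min' x (l.length - 1) (by rw [tiling_last hl]; trivial)
    omega
  have hkf_min : ∀ x j, j < kf x → x ∉ l.getD j ∅ := fun x j hj hmem => by
    have := hkf_min' x j hmem; omega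
  have hlow : ∀ k, k < l.length → IsLowerSet (l.getD k ∅) := by
    intro k hk
    rw [List.getD_eq_getElem _ _ hk]
    exact hl.1 _ (List.getElem_mem hk)
  have hk_mono : ∀ x y : P, x ≤ y → kf x ≤ kf y := by
    intro x y hxy
    exact hkf_min' x _ (hlow _ (hkf_lt y) hxy (hkf_mem y))
  -- level structure
  have hlev0 : ∀ x y : P, kf x = 0 → kf y = 0 → x = y := by
    intro x y hx hy
    have hsub : (l.getD 0 ∅).ncard ≤ 1 := by
      rw [tiling_ncard hl hlenpos]
      simp only [Nat.mul_zero, Nat.add_zero]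
      omega
    have h1 := (Set.ncard_le_one (Set.toFinite _)).mp hsub
    exact h1 x (by rw [← hx]; exact hkf_mem x) y (by rw [← hy]; exact hkf_mem y)
  have hlev : ∀ (x : P), 0 < kf x →
      ∃ a b : P, a < b ∧ (∀ z : P, kf z = kf x → z = a ∨ z = b) := by
    intro x hx
    have hilt : kf x - 1 + 1 < l.length := by
      have := hkf_lt x; omega
    obtain ⟨-, a, b, hab, hdiff⟩ := tiling_chain hl hilt
    have heq : kf x - 1 + 1 = kf x := by omega
    rw [heq] at hdiff
    refine ⟨a, b, hab, ?_⟩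
    intro z hz
    have h1 : z ∈ l.getD (kf x) ∅ := by rw [← hz]; exact hkf_mem z
    have h2 : z ∉ l.getD (kf x - 1) ∅ := by
      rw [← hz] at hx ⊢
      exact hkf_min z _ (by omega)
    have : z ∈ ({a, b} : Set P) := by rw [← hdiff]; exact ⟨h1, h2⟩
    simpa using this
  obtain ⟨bit, hbit1, hbit0⟩ : ∃ bit : P → ℕ,
      (∀ x : P, (∃ w, w < x ∧ kf w = kf x) → bit x = 1) ∧
      (∀ x : P, ¬ (∃ w, w < x ∧ kf w = kf x) → bit x = 0) :=
    ⟨fun x => if ∃ w, w < x ∧ kf w = kf x then 1 else 0,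
      fun x h => if_pos h, fun x h => if_neg h⟩
  have hbit_le : ∀ x, bit x ≤ 1 := by
    intro x
    by_cases h : ∃ w, w < x ∧ kf w = kf x
    · rw [hbit1 x h]
    · rw [hbit0 x h]; omega
  obtain ⟨g, hgdef⟩ : ∃ g : P → ℕ, ∀ x, g x = 2 * kf x + bit x :=
    ⟨fun x => 2 * kf x + bit x, fun _ => rfl⟩
  have hbit_pair : ∀ x y : P, x < y → kf x = kf y → bit x = 0 ∧ bit y = 1 := by
    intro x y hxy hk
    refine ⟨?_, hbit1 y ⟨x, hxy, hk⟩⟩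
    apply hbit0
    rintro ⟨w, hw1, hw2⟩
    rcases Nat.eq_zero_or_pos (kf x) with h0 | h0
    · exact absurd (hlev0 w x (by omega) h0) (ne_of_lt hw1)
    · obtain ⟨a, b, hab, hmem⟩ := hlev x h0
      have hwx : w ≠ x := ne_of_lt hw1
      have hwy : w ≠ y := ne_of_lt (hw1.trans hxy)
      have hxy' : x ≠ y := ne_of_lt hxy
      rcases hmem w (by omega) with rfl | rfl <;>
        rcases hmem x rfl with h2 | h2 <;>
        rcases hmem y (by omega) with h3 | h3 <;>
        first
          | exact hwx h2.symm
          | exact hwy h3.symm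
          | exact hxy' (h2.trans h3.symm)
  have hg_strict : ∀ x y : P, x < y → g x < g y := by
    intro x y hxy
    have hk := hk_mono x y hxy.le
    rw [hgdef, hgdef]
    rcases Nat.lt_or_ge (kf x) (kf y) with h | h
    · have := hbit_le x; have := hbit_le y
      omega
    · have hkeq : kf x = kf y := by omega
      obtain ⟨h0, h1⟩ := hbit_pair x y hxy hkeq
      omega
  have hg_inj : Function.Injective g := by
    intro x y hxy
    by_contra hne
    have hb1 := hbit_le x; have hb2 := hbit_le y
    rw [hgdef, hgdef] at hxy
    have hkeq : kf x = kf y := by omega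
    have hbeq : bit x = bit y := by omega
    rcases Nat.eq_zero_or_pos (kf x) with h0 | h0
    · exact hne (hlev0 x y h0 (by omega))
    · obtain ⟨a, b, hab, hmem⟩ := hlev x h0
      have hor : x < y ∨ y < x := by
        rcases hmem x rfl with rfl | rfl <;> rcases hmem y (by omega) with h2 | h2
        · exact absurd h2.symm hne
        · subst h2; exact Or.inl hab
        · subst h2; exact Or.inr hab
        · exact absurd h2.symm hne
      rcases hor with h | h
      · obtain ⟨e0, e1⟩ := hbit_pair x y h hkeq; omega
      · obtain ⟨e0, e1⟩ := hbit_pair y x h hkeq.symm; omega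
  -- build the equivalence
  obtain ⟨f, hflt⟩ : ∃ f : P ≃ Fin (Fintype.card P), ∀ x y : P, g x < g y → f x < f y := by
    have hscard : (Finset.image g Finset.univ).card = Fintype.card P := by
      rw [Finset.card_image_of_injective _ hg_inj, Finset.card_univ]
    have e := (Finset.image g Finset.univ).orderIsoOfFin hscard
    have hFbij : Function.Bijective (fun x : P =>
        (⟨g x, Finset.mem_image_of_mem g (Finset.mem_univ x)⟩ :
          {v // v ∈ Finset.image g Finset.univ})) := by
      constructor
      · intro a b hab
        exact hg_inj (congrArg Subtype.val hab)
      · rintro ⟨v, hv⟩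
        obtain ⟨x, -, rfl⟩ := Finset.mem_image.mp hv
        exact ⟨x, rfl⟩
    refine ⟨(Equiv.ofBijective _ hFbij).trans e.symm.toEquiv, ?_⟩
    intro x y h
    simp only [Equiv.trans_apply, Equiv.ofBijective_apply]
    exact (OrderIso.lt_iff_lt e.symm).mpr (Subtype.mk_lt_mk.mpr h)
  refine ⟨f, ?_, ?_⟩
  · intro x y hxy
    rcases eq_or_lt_of_le hxy with rfl | h
    · exact le_refl _
    · exact (hflt x y (hg_strict x y h)).le
  · intro k hk a ha b hb
    have hka : kf a ≤ k := hkf_min' a k ha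
    have hkb : k < kf b := by
      by_contra h
      push_neg at h
      exact hb.2 (tiling_subset hl h (by omega) (hkf_mem b))
    apply hflt
    have := hbit_le a; have := hbit_le b
    rw [hgdef, hgdef]
    omega

end Main4

section Flip
variable {P : Type*} [PartialOrder P] [Fintype P]

def BadAt (f : P ≃ Fin (Fintype.card P)) (j : ℕ) : Prop :=
  j % 2 = Fintype.card P % 2 ∧ j + 1 < Fintype.card P ∧
    ∀ x y : P, (f x : ℕ) = j → (f y : ℕ) = j + 1 → ¬ x < y

noncomputable def flipF (f : P ≃ Fin (Fintype.card P)) : P ≃ Fin (Fintype.card P) :=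
  if h : ∃ j, BadAt f j then
    f.trans (Equiv.swap ⟨Nat.find h, by have := (Nat.find_spec h).2.1; omega⟩
      ⟨Nat.find h + 1, (Nat.find_spec h).2.1⟩)
  else f

variable {f : P ≃ Fin (Fintype.card P)}

lemma flipF_eq' (hb : ∃ j, BadAt f j) {j : ℕ} (hj : Nat.find hb = j)
    (h1 : j + 1 < Fintype.card P) :
    flipF f = f.trans (Equiv.swap ⟨j, by omega⟩ ⟨j + 1, h1⟩) := by
  subst hj
  unfold flipF
  rw [dif_pos hb]

lemma eq_symm_of {c : Fin (Fintype.card P)} {x : P} (h : f x = c) : x = f.symm c := by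
  rw [← h, Equiv.symm_apply_apply]

lemma badAt_of_not_good (hb : ¬ GoodF f) : ∃ j, BadAt f j := by
  rw [GoodF] at hb
  push_neg at hb
  obtain ⟨x, y, hx, hy, hxy⟩ := hb
  exact ⟨(f x : ℕ), hx, by rw [← hy]; exact (f y).2, by
    intro x' y' hx' hy' hlt
    have ex : x' = x := f.injective (Fin.ext hx')
    have ey : y' = y := f.injective (Fin.ext (by omega))
    rw [ex, ey] at hlt
    exact hxy hlt⟩

lemma not_good_of_badAt {j : ℕ} (h : BadAt f j) : ¬ GoodF f := by
  intro hg
  obtain ⟨h1, h2, h3⟩ := h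
  have ha : (f (f.symm ⟨j, by omega⟩) : ℕ) = j := by simp
  have hbv : (f (f.symm ⟨j + 1, h2⟩) : ℕ) = j + 1 := by simp
  exact h3 _ _ ha hbv (hg _ _ (by omega) (by omega))

lemma flipF_spec (hf : Monotone ⇑f) (hb : ∃ j, BadAt f j) :
    Monotone ⇑(flipF f) ∧ (∃ j, BadAt (flipF f) j) ∧ flipF (flipF f) = f ∧ flipF f ≠ f ∧
    ∀ (ω : P ≃ Fin (Fintype.card P)),
      ((Equiv.Perm.sign ((flipF f).symm.trans ω) : ℤˣ) : ℤ) =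
        -((Equiv.Perm.sign (f.symm.trans ω) : ℤˣ) : ℤ) := by
  classical
  set j := Nat.find hb with hjdef
  have hj : BadAt f j := Nat.find_spec hb
  have hjmin : ∀ i, i < j → ¬ BadAt f i := fun i hi => Nat.find_min hb hi
  have hjn : j + 1 < Fintype.card P := hj.2.1
  set a : Fin (Fintype.card P) := ⟨j, by omega⟩ with hadef
  set b : Fin (Fintype.card P) := ⟨j + 1, hjn⟩ with hbdef
  have hflip : flipF f = f.trans (Equiv.swap a b) := flipF_eq' hb hjdef.symm hjn
  have hab : a ≠ b := by
    intro h
    have : j = j + 1 := congrArg Fin.val h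
    omega
  have hswap : ∀ w : Fin (Fintype.card P), ((Equiv.swap a b) w : ℕ) =
      if (w : ℕ) = j then j + 1 else if (w : ℕ) = j + 1 then j else (w : ℕ) := by
    intro w
    by_cases hwa : w = a
    · subst hwa
      rw [Equiv.swap_apply_left, if_pos rfl]
    · by_cases hwb : w = b
      · subst hwb
        rw [Equiv.swap_apply_right, if_neg (by show j + 1 ≠ j; omega), if_pos rfl]
      · rw [Equiv.swap_apply_of_ne_of_ne hwa hwb,
          if_neg (fun h => hwa (Fin.ext h)), if_neg (fun h => hwb (Fin.ext h))]
  have hnotlt : ¬ (f.symm a < f.symm b) := hj.2.2 _ _ (by simp [hadef]) (by simp [hbdef])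
  have hnotgt : ¬ (f.symm b < f.symm a) := by
    intro h
    have := hf h.le
    simp only [Equiv.apply_symm_apply] at this
    have := Fin.le_def.mp this
    simp only [hadef, hbdef] at this
    omega
  -- exclusion of the ordered pair
  have hexcl : ∀ u v : P, u < v → ¬ ((f u : ℕ) = j ∧ (f v : ℕ) = j + 1) := by
    rintro u v huv ⟨h1, h2⟩
    have eu : u = f.symm a := eq_symm_of (Fin.ext h1)
    have ev : v = f.symm b := eq_symm_of (Fin.ext h2)
    rw [eu, ev] at huv
    exact hnotlt huv
  have hmono : Monotone ⇑(flipF f) := by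
    have hstrict : ∀ u v : P, u < v → (flipF f) u < (flipF f) v := by
      intro u v huv
      have hfuv : (f u : ℕ) < (f v : ℕ) := Fin.lt_def.mp ((hf.strictMono_of_injective f.injective) huv)
      have hvn : (f v : ℕ) < Fintype.card P := (f v).2
      rw [hflip]
      simp only [Equiv.trans_apply]
      rw [Fin.lt_def, hswap, hswap]
      have := hexcl u v huv
      split_ifs <;> omega
    intro u v huv
    rcases eq_or_lt_of_le huv with rfl | h
    · exact le_refl _
    · exact (hstrict u v h).le
  -- value transfer
  have hval : ∀ (x : P), ((flipF f) x : ℕ) =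
      if (f x : ℕ) = j then j + 1 else if (f x : ℕ) = j + 1 then j else (f x : ℕ) := by
    intro x
    rw [hflip]
    simp only [Equiv.trans_apply]
    exact hswap (f x)
  have hbad' : BadAt (flipF f) j := by
    refine ⟨hj.1, hjn, ?_⟩
    intro x y hx hy hlt
    have hfx : (f x : ℕ) = j + 1 := by
      have := hval x
      split_ifs at this <;> omega
    have hfy : (f y : ℕ) = j := by
      have := hval y
      split_ifs at this <;> omega
    have ex : x = f.symm b := eq_symm_of (Fin.ext hfx)
    have ey : y = f.symm a := eq_symm_of (Fin.ext hfy)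
    rw [ex, ey] at hlt
    exact hnotgt hlt
  have hb' : ∃ i, BadAt (flipF f) i := ⟨j, hbad'⟩
  have hfind' : Nat.find hb' = j := by
    apply le_antisymm (Nat.find_min' hb' hbad')
    by_contra h
    push_neg at h
    have hj' := Nat.find_spec hb'
    set i := Nat.find hb' with hidef
    have hlt : i < j := h
    have hpar : i % 2 = j % 2 := by rw [hj'.1, hj.1]
    have hi1 : i + 1 < j := by omega
    apply hjmin i hlt
    refine ⟨hj'.1, hj'.2.1, ?_⟩
    intro x y hx hy
    apply hj'.2.2 x y
    · rw [hval x, if_neg (by omega), if_neg (by omega)]; exact hx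
    · rw [hval y, if_neg (by omega), if_neg (by omega)]; exact hy
  refine ⟨hmono, hb', ?_, ?_, ?_⟩
  · have heq2 : flipF (flipF f) = (flipF f).trans (Equiv.swap a b) :=
      flipF_eq' hb' hfind' hjn
    rw [heq2, hflip, Equiv.trans_assoc, Equiv.swap_swap, Equiv.trans_refl]
  · intro h
    have h1 : (flipF f) (f.symm a) = f (f.symm a) := by rw [h]
    rw [hflip] at h1
    simp only [Equiv.trans_apply, Equiv.apply_symm_apply, Equiv.swap_apply_left] at h1
    exact hab h1.symm
  · intro ω
    have hsymm : (flipF f).symm.trans ω = (f.symm.trans ω) * (Equiv.swap a b) := by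
      apply Equiv.ext
      intro w
      simp [hflip, Equiv.Perm.mul_apply, Equiv.symm_swap]
    rw [hsymm, Equiv.Perm.sign_mul, Equiv.Perm.sign_swap hab]
    push_cast
    ring

end Flip

/-- let `P` be a finite poset with a minimum element and
`ω : P ≃ {1,…,n}` any labeling.  Every domino tiling `D` determines a unique
compatible linear extension `f_D`; if `P` is domino-tileable then the
sign-imbalance `I_{P,ω} = ∑_f sign(ω ∘ f⁻¹)` (over all linear extensions,
i.e. monotone bijections `f : P → {1,…,n}`) equals `∑_D sign(π(f_D))`, and if
`P` is not domino-tileable then `I_{P,ω} = 0`. -/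
theorem statement13 {P : Type*} [PartialOrder P] [Fintype P] [OrderBot P]
    (ω : P ≃ Fin (Fintype.card P)) :
    (∀ l : List (Set P), IsDominoTiling l →
      ∃! f : P ≃ Fin (Fintype.card P), Monotone ⇑f ∧ TilingCompatible l f) ∧
    ((∃ l : List (Set P), IsDominoTiling l) →
      (∑ᶠ f ∈ {f : P ≃ Fin (Fintype.card P) | Monotone ⇑f},
          ((Equiv.Perm.sign (f.symm.trans ω) : ℤˣ) : ℤ)) =
        ∑ᶠ l ∈ {l : List (Set P) | IsDominoTiling l},
          ∑ᶠ f ∈ {f : P ≃ Fin (Fintype.card P) | Monotone ⇑f ∧ TilingCompatible l f},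
            ((Equiv.Perm.sign (f.symm.trans ω) : ℤˣ) : ℤ)) ∧
    (¬ (∃ l : List (Set P), IsDominoTiling l) →
      (∑ᶠ f ∈ {f : P ≃ Fin (Fintype.card P) | Monotone ⇑f},
          ((Equiv.Perm.sign (f.symm.trans ω) : ℤˣ) : ℤ)) = 0) := by
  classical
  set sgn : (P ≃ Fin (Fintype.card P)) → ℤ :=
    fun f => ((Equiv.Perm.sign (f.symm.trans ω) : ℤˣ) : ℤ) with hsgn
  set Msf : Finset (P ≃ Fin (Fintype.card P)) :=
    Finset.univ.filter (fun f => Monotone ⇑f) with hMsf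
  have hMcoe : {f : P ≃ Fin (Fintype.card P) | Monotone ⇑f} = ↑Msf := by
    ext f; simp [hMsf]
  have hLHS : (∑ᶠ f ∈ {f : P ≃ Fin (Fintype.card P) | Monotone ⇑f}, sgn f)
      = ∑ f ∈ Msf, sgn f := by
    rw [hMcoe, finsum_mem_coe_finset]
  have hbadzero : ∑ f ∈ Msf.filter (fun f => ¬ GoodF f), sgn f = 0 := by
    apply Finset.sum_involution (fun f _ => flipF f)
    · intro f hf
      simp only [Finset.mem_filter, hMsf, Finset.mem_univ, true_and] at hf
      obtain ⟨hmono, hbadf⟩ := hf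
      have hspec := flipF_spec hmono (badAt_of_not_good hbadf)
      rw [hsgn]
      dsimp only
      rw [hspec.2.2.2.2 ω]
      ring
    · intro f hf _
      simp only [Finset.mem_filter, hMsf, Finset.mem_univ, true_and] at hf
      exact (flipF_spec hf.1 (badAt_of_not_good hf.2)).2.2.2.1
    · intro f hf
      simp only [Finset.mem_filter, hMsf, Finset.mem_univ, true_and] at hf
      exact (flipF_spec hf.1 (badAt_of_not_good hf.2)).2.2.1
    · intro f hf
      simp only [Finset.mem_filter, hMsf, Finset.mem_univ, true_and] at hf ⊢
      have hspec := flipF_spec hf.1 (badAt_of_not_good hf.2)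
      obtain ⟨j, hj⟩ := hspec.2.1
      exact ⟨hspec.1, not_good_of_badAt hj⟩
  have part1 : ∀ l : List (Set P), IsDominoTiling l →
      ∃! f : P ≃ Fin (Fintype.card P), Monotone ⇑f ∧ TilingCompatible l f := by
    intro l hl
    obtain ⟨f, hfm, hfc⟩ := compatible_exists hl
    exact ⟨f, ⟨hfm, hfc⟩, fun g hg => compatible_unique hl hg.1 hg.2 hfm hfc⟩
  have hTfin : {l : List (Set P) | IsDominoTiling l}.Finite := by
    apply Set.Finite.subset
      (Set.Finite.image LfList (Set.finite_univ (α := P ≃ Fin (Fintype.card P))))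
    intro l hl
    obtain ⟨f, hfm, hfc⟩ := compatible_exists hl
    exact ⟨f, trivial, (tiling_eq_lfList hl hfm hfc).symm⟩
  refine ⟨part1, ?_, ?_⟩
  · intro _
    rw [show {l : List (Set P) | IsDominoTiling l} = ↑hTfin.toFinset from
      (Set.Finite.coe_toFinset hTfin).symm, finsum_mem_coe_finset]
    have key : ∑ f ∈ Msf.filter GoodF, sgn f =
        ∑ l ∈ hTfin.toFinset, ∑ᶠ f ∈ {f : P ≃ Fin (Fintype.card P) |
          Monotone ⇑f ∧ TilingCompatible l f}, sgn f := by
      apply Finset.sum_bij (fun f _ => LfList f)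
      · intro f hf
        simp only [Finset.mem_filter, hMsf, Finset.mem_univ, true_and] at hf
        rw [Set.Finite.mem_toFinset]
        exact lfList_tiling_of_good hf.1 hf.2
      · intro f1 hf1 f2 hf2 heq
        simp only [Finset.mem_filter, hMsf, Finset.mem_univ, true_and] at hf1 hf2
        have ht : IsDominoTiling (LfList f1) := lfList_tiling_of_good hf1.1 hf1.2
        exact compatible_unique ht hf1.1 (lfList_compatible f1) hf2.1
          (heq ▸ lfList_compatible f2)
      · intro l hl
        rw [Set.Finite.mem_toFinset] at hl
        obtain ⟨f, hfm, hfc⟩ := compatible_exists hl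
        have hleq : l = LfList f := tiling_eq_lfList hl hfm hfc
        have hgood : GoodF f := goodF_of_tiling (hleq ▸ hl) hfm
        exact ⟨f, by simp [hMsf, hfm, hgood], hleq.symm⟩
      · intro f hf
        simp only [Finset.mem_filter, hMsf, Finset.mem_univ, true_and] at hf
        have ht : IsDominoTiling (LfList f) := lfList_tiling_of_good hf.1 hf.2
        have hset : {f' : P ≃ Fin (Fintype.card P) |
            Monotone ⇑f' ∧ TilingCompatible (LfList f) f'} = {f} := by
          ext f'
          simp only [Set.mem_setOf_eq, Set.mem_singleton_iff]
          constructor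
          · rintro ⟨h1, h2⟩
            exact compatible_unique ht h1 h2 hf.1 (lfList_compatible f)
          · rintro rfl
            exact ⟨hf.1, lfList_compatible _⟩
        rw [hset, finsum_mem_singleton]
    rw [hLHS, ← Finset.sum_filter_add_sum_filter_not Msf GoodF sgn, hbadzero, add_zero, key]
  · intro hno
    have hempty : Msf.filter GoodF = ∅ := by
      rw [Finset.filter_eq_empty_iff]
      intro f hf
      simp only [hMsf, Finset.mem_filter, Finset.mem_univ, true_and] at hf
      intro hgood
      exact hno ⟨LfList f, lfList_tiling_of_good hf hgood⟩
    rw [hLHS, ← Finset.sum_filter_add_sum_filter_not Msf GoodF sgn, hbadzero, add_zero,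
      hempty, Finset.sum_empty]
end
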